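/- For any finite simple graph G, the sum over all edges {u, v} ∈ E(G) of min(deg(u), deg(v)) is at most 2·α(G)·|E(G)|, where α(G) is the arboricity of G. -/

import Mathlib

set_option linter.unusedSectionVars false

open Finset SimpleGraph

namespace ChibaAux

variable {V : Type} [Fintype V] [DecidableEq V]

lemma walk_eq_of_isPath {H : SimpleGraph V} (hH : H.IsAcyclic) {a b : V}
    {p q : H.Walk a b} (hp : p.IsPath) (hq : q.IsPath) : p = q :=
  congrArg Subtype.val (hH.path_unique ⟨p, hp⟩ ⟨q, hq⟩)

lemma length_eq_dist {H : SimpleGraph V} (hH : H.IsAcyclic) {a b : V}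
    {p : H.Walk a b} (hp : p.IsPath) : p.length = H.dist a b := by
  obtain ⟨q, hq⟩ := p.reachable.exists_walk_length_eq_dist
  have h1 : p = q.bypass := walk_eq_of_isPath hH hp q.bypass_isPath
  refine le_antisymm ?_ (dist_le p)
  calc p.length = q.bypass.length := by rw [h1]
    _ ≤ q.length := q.length_bypass_le
    _ = H.dist a b := hq

lemma isPath_concat {H : SimpleGraph V} {a b c : V} {p : H.Walk a b} (hp : p.IsPath)
    (h : H.Adj b c) (hc : c ∉ p.support) : (p.concat h).IsPath := by
  rw [SimpleGraph.Walk.isPath_def, SimpleGraph.Walk.support_concat,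
    List.nodup_append]
  refine ⟨(SimpleGraph.Walk.isPath_def p).mp hp, List.nodup_singleton _, ?_⟩
  simpa using fun (x : V) (hx : x ∈ p.support) (hxc : x = c) => hc (hxc ▸ hx)


lemma adj_dist_cases {H : SimpleGraph V} (hH : H.IsAcyclic) {r u v : V}
    (h : H.Adj u v) (hr : H.Reachable r u) :
    H.dist r v = H.dist r u + 1 ∨ H.dist r v < H.dist r u := by
  obtain ⟨p0, hp0⟩ := hr.exists_walk_length_eq_dist
  set p := p0.bypass with hpdef
  have hp : p.IsPath := p0.bypass_isPath
  have hplen : p.length = H.dist r u := length_eq_dist hH hp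
  by_cases hv : v ∈ p.support
  · right
    have hq : (p.takeUntil v hv).IsPath := hp.takeUntil hv
    have h1 : (p.takeUntil v hv).length = H.dist r v := length_eq_dist hH hq
    have h2 : (p.takeUntil v hv).length ≤ p.length := p.length_takeUntil_le hv
    have h3 : (p.takeUntil v hv).length ≠ p.length := by
      intro heq
      have hspec := p.take_spec hv
      have := congrArg SimpleGraph.Walk.length hspec
      rw [SimpleGraph.Walk.length_append] at this
      have h0 : (p.dropUntil v hv).length = 0 := by omega
      exact h.ne' (SimpleGraph.Walk.eq_of_length_eq_zero h0)
    omega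
  · left
    have hq : (p.concat h).IsPath := isPath_concat hp h hv
    have h1 : (p.concat h).length = H.dist r v := length_eq_dist hH hq
    rw [SimpleGraph.Walk.length_concat] at h1
    omega

lemma adj_dist_ne {H : SimpleGraph V} (hH : H.IsAcyclic) {r u v : V}
    (h : H.Adj u v) (hr : H.Reachable r u) : H.dist r u ≠ H.dist r v := by
  rcases adj_dist_cases hH h hr with h1 | h1 <;> omega

lemma parent_eq {H : SimpleGraph V} (hH : H.IsAcyclic) {r u w : V}
    (h : H.Adj u w) (hu : H.dist r u < H.dist r w) (hr : H.Reachable r u)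
    {p : H.Walk r w} (hp : p.IsPath) : p.reverse.getVert 1 = u := by
  obtain ⟨p0, hp0⟩ := hr.exists_walk_length_eq_dist
  set q := p0.bypass with hqdef
  have hq : q.IsPath := p0.bypass_isPath
  have hqlen : q.length = H.dist r u := length_eq_dist hH hq
  have hw : w ∉ q.support := by
    intro hmem
    have h1 : (q.takeUntil w hmem).length = H.dist r w := length_eq_dist hH (hq.takeUntil hmem)
    have h2 : (q.takeUntil w hmem).length ≤ q.length := q.length_takeUntil_le hmem
    omega
  have hcat : (q.concat h).IsPath := isPath_concat hq h hw
  have hpq : p = q.concat h := walk_eq_of_isPath hH hp hcat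
  rw [hpq, SimpleGraph.Walk.reverse_concat, SimpleGraph.Walk.getVert_cons_succ,
    SimpleGraph.Walk.getVert_zero]


lemma forest_inj (H : SimpleGraph V) (hH : H.IsAcyclic) :
    ∃ f : Sym2 V → V, Set.InjOn f H.edgeSet ∧ ∀ e ∈ H.edgeSet, f e ∈ e := by
  classical
  let D : V → ℕ := fun x => H.dist ((H.connectedComponentMk x).out) x
  let σ : V ≃ Fin (Fintype.card V) := Fintype.equivFin V
  let g : V → V → V := fun u v =>
    if D u < D v then v else if D v < D u then u else if (σ u : ℕ) ≤ (σ v : ℕ) then v else u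
  have hsymm : ∀ u v, g u v = g v u := by
    intro u v
    show (if D u < D v then v else if D v < D u then u
        else if (σ u : ℕ) ≤ (σ v : ℕ) then v else u) =
      (if D v < D u then u else if D u < D v then v
        else if (σ v : ℕ) ≤ (σ u : ℕ) then u else v)
    split_ifs with h1 h2 h3 h4 h5 h6 h7 h8 h9 <;>
      first
        | rfl
        | (exfalso; omega)
        | (exact σ.injective (Fin.ext (by omega)))
        | (exact (σ.injective (Fin.ext (by omega))).symm)
  let f : Sym2 V → V := Sym2.lift ⟨g, hsymm⟩
  have hmem : ∀ e, f e ∈ e := by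
    intro e
    induction e with
    | _ u v =>
      show g u v ∈ s(u, v)
      show (if D u < D v then v else if D v < D u then u
        else if (σ u : ℕ) ≤ (σ v : ℕ) then v else u) ∈ s(u, v)
      split_ifs <;> simp
  -- representatives agree along edges
  have hrep : ∀ {u v : V}, H.Adj u v →
      (H.connectedComponentMk u).out = (H.connectedComponentMk v).out := by
    intro u v h
    have : H.connectedComponentMk u = H.connectedComponentMk v :=
      SimpleGraph.ConnectedComponent.sound h.reachable
    rw [this]
  have hreach : ∀ u : V, H.Reachable ((H.connectedComponentMk u).out) u := by
    intro u
    have : H.connectedComponentMk ((H.connectedComponentMk u).out)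
        = H.connectedComponentMk u := (H.connectedComponentMk u).out_eq
    exact (SimpleGraph.ConnectedComponent.eq).mp this
  have hDne : ∀ {u v : V}, H.Adj u v → D u ≠ D v := by
    intro u v h
    show H.dist ((H.connectedComponentMk u).out) u ≠ H.dist ((H.connectedComponentMk v).out) v
    rw [← hrep h]
    exact adj_dist_ne hH h (hreach u)
  have hspec : ∀ {u v : V}, H.Adj u v → f s(u, v) = v → D u < D v := by
    intro u v h hf
    have hne := hDne h
    rcases lt_or_gt_of_ne hne with h1 | h1
    · exact h1
    · exfalso
      have : f s(u, v) = u := by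
        show (if D u < D v then v else if D v < D u then u
          else if (σ u : ℕ) ≤ (σ v : ℕ) then v else u) = u
        rw [if_neg (asymm h1), if_pos h1]
      exact h.ne (this.symm.trans hf)
  refine ⟨f, ?_, fun e _ => hmem e⟩
  intro e1 he1 e2 he2 hff
  set w := f e2 with hw
  have hw1 : w ∈ e1 := hff ▸ hmem e1
  have hw2 : w ∈ e2 := hmem e2
  set u1 := Sym2.Mem.other' hw1 with hu1
  set u2 := Sym2.Mem.other' hw2 with hu2
  have he1eq : s(w, u1) = e1 := Sym2.other_spec' hw1
  have he2eq : s(w, u2) = e2 := Sym2.other_spec' hw2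
  have hadj1 : H.Adj w u1 := by rw [← SimpleGraph.mem_edgeSet, he1eq]; exact he1
  have hadj2 : H.Adj w u2 := by rw [← SimpleGraph.mem_edgeSet, he2eq]; exact he2
  have hd1 : D u1 < D w := hspec hadj1.symm (by rw [Sym2.eq_swap, he1eq]; exact hff)
  have hd2 : D u2 < D w := hspec hadj2.symm (by rw [Sym2.eq_swap, he2eq])
  -- common root
  set r := (H.connectedComponentMk w).out with hr
  have hru1 : H.dist r u1 < H.dist r w := by
    have : D u1 = H.dist r u1 := by
      show H.dist ((H.connectedComponentMk u1).out) u1 = _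
      rw [hrep hadj1.symm]
    rw [← this]; exact hd1
  have hru2 : H.dist r u2 < H.dist r w := by
    have : D u2 = H.dist r u2 := by
      show H.dist ((H.connectedComponentMk u2).out) u2 = _
      rw [hrep hadj2.symm]
    rw [← this]; exact hd2
  obtain ⟨p0, hp0⟩ := (hreach w).exists_walk_length_eq_dist
  have hp : p0.bypass.IsPath := p0.bypass_isPath
  have e1u : p0.bypass.reverse.getVert 1 = u1 :=
    parent_eq hH hadj1.symm hru1 ((hreach w).trans hadj1.reachable) hp
  have e2u : p0.bypass.reverse.getVert 1 = u2 :=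
    parent_eq hH hadj2.symm hru2 ((hreach w).trans hadj2.reachable) hp
  rw [← he1eq, ← he2eq, ← e1u, ← e2u]


lemma isAcyclic_fromEdgeSet_of_subsingleton (s : Set (Sym2 V)) (hs : s.Subsingleton) :
    (SimpleGraph.fromEdgeSet s).IsAcyclic := by
  intro v c hc
  have h3 := hc.three_le_length
  have hnodup := hc.edges_nodup
  have hmem : ∀ e ∈ c.edges, e ∈ s := by
    intro e he
    have := c.edges_subset_edgeSet he
    rw [SimpleGraph.edgeSet_fromEdgeSet] at this
    exact this.1
  have hlen : 3 ≤ c.edges.length := by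
    rw [SimpleGraph.Walk.length_edges]; exact h3
  obtain ⟨e1, e2, t, hte⟩ : ∃ e1 e2 t, c.edges = e1 :: e2 :: t := by
    match hl : c.edges with
    | [] => rw [hl] at hlen; simp at hlen
    | [a] => rw [hl] at hlen; simp at hlen
    | a :: b :: t => exact ⟨a, b, t, rfl⟩
  rw [hte] at hnodup hmem
  have hne : e1 ≠ e2 := by
    have := hnodup
    simp [List.nodup_cons] at this
    tauto
  exact hne (hs (hmem e1 (by simp)) (hmem e2 (by simp)))

lemma arboricity_nonempty (G : SimpleGraph V) [DecidableRel G.Adj] :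
    {k : ℕ | ∃ c : Sym2 V → Fin k, ∀ i : Fin k,
      (SimpleGraph.fromEdgeSet {e ∈ G.edgeSet | c e = i}).IsAcyclic}.Nonempty := by
  classical
  refine ⟨G.edgeFinset.card + 1, ?_⟩
  let n := G.edgeFinset.card
  let c : Sym2 V → Fin (n + 1) := fun e =>
    if he : e ∈ G.edgeFinset then (G.edgeFinset.equivFin ⟨e, he⟩).castSucc else Fin.last n
  refine ⟨c, fun i => isAcyclic_fromEdgeSet_of_subsingleton _ ?_⟩
  intro e1 he1 e2 he2
  simp only [Set.mem_setOf_eq] at he1 he2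
  have m1 : e1 ∈ G.edgeFinset := by rw [SimpleGraph.mem_edgeFinset]; exact he1.1
  have m2 : e2 ∈ G.edgeFinset := by rw [SimpleGraph.mem_edgeFinset]; exact he2.1
  have hc1 : c e1 = i := he1.2
  have hc2 : c e2 = i := he2.2
  rw [show c e1 = (G.edgeFinset.equivFin ⟨e1, m1⟩).castSucc from dif_pos m1] at hc1
  rw [show c e2 = (G.edgeFinset.equivFin ⟨e2, m2⟩).castSucc from dif_pos m2] at hc2
  have : G.edgeFinset.equivFin ⟨e1, m1⟩ = G.edgeFinset.equivFin ⟨e2, m2⟩ :=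
    Fin.castSucc_injective _ (hc1.trans hc2.symm)
  have := G.edgeFinset.equivFin.injective this
  exact congrArg Subtype.val this

end ChibaAux


/-- The arboricity of a graph: the minimum number `k` of forests into which the edge set can
be partitioned (a partition of the edges into `k` acyclic graphs). -/
noncomputable def arboricity {V : Type} (G : SimpleGraph V) : ℕ :=
  sInf {k : ℕ | ∃ c : Sym2 V → Fin k, ∀ i : Fin k,
    (SimpleGraph.fromEdgeSet {e ∈ G.edgeSet | c e = i}).IsAcyclic}

set_option maxHeartbeats 1000000 in
/-- Chiba–Nishizeki lemma: the sum over all edges `{u, v}` of `min (deg u) (deg v)` is at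
most `2 · α(G) · |E(G)|`, where `α(G)` is the arboricity of `G`. -/
theorem stmt_15 {V : Type} [Fintype V] [DecidableEq V]
    (G : SimpleGraph V) [DecidableRel G.Adj] :
    ∑ e ∈ G.edgeFinset,
        Sym2.lift ⟨fun u v => min (G.degree u) (G.degree v),
          fun u v => by simp [min_comm]⟩ e
      ≤ 2 * arboricity G * G.edgeFinset.card := by
  classical
  set M : Sym2 V → ℕ := Sym2.lift ⟨fun u v => min (G.degree u) (G.degree v),
    fun u v => by simp [min_comm]⟩ with hM
  obtain ⟨c, hc⟩ : ∃ c : Sym2 V → Fin (arboricity G), ∀ i : Fin (arboricity G),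
      (SimpleGraph.fromEdgeSet {e ∈ G.edgeSet | c e = i}).IsAcyclic :=
    Nat.sInf_mem (ChibaAux.arboricity_nonempty G)
  have key : ∀ i : Fin (arboricity G),
      ∑ e ∈ G.edgeFinset.filter (fun e => c e = i), M e ≤ 2 * G.edgeFinset.card := by
    intro i
    obtain ⟨f, hinj, hfmem⟩ := ChibaAux.forest_inj
      (SimpleGraph.fromEdgeSet {e ∈ G.edgeSet | c e = i}) (hc i)
    set S := G.edgeFinset.filter (fun e => c e = i) with hS
    have hSsub : ∀ e ∈ S, e ∈ (SimpleGraph.fromEdgeSet {e ∈ G.edgeSet | c e = i}).edgeSet := by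
      intro e he
      rw [SimpleGraph.edgeSet_fromEdgeSet]
      rw [hS, Finset.mem_filter, SimpleGraph.mem_edgeFinset] at he
      exact ⟨⟨he.1, he.2⟩, G.not_isDiag_of_mem_edgeSet he.1⟩
    calc ∑ e ∈ S, M e ≤ ∑ e ∈ S, G.degree (f e) := by
          apply Finset.sum_le_sum
          intro e he
          have hfe : f e ∈ e := hfmem e (hSsub e he)
          clear he
          induction e with
          | _ u v =>
            simp only [hM, Sym2.lift_mk]
            rcases Sym2.mem_iff.mp hfe with h | h <;> rw [h]
            · exact min_le_left _ _
            · exact min_le_right _ _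
      _ = ∑ v ∈ S.image f, G.degree v := by
          rw [Finset.sum_image (fun x hx y hy hxy => hinj (hSsub x hx) (hSsub y hy) hxy)]
      _ ≤ ∑ v, G.degree v := Finset.sum_le_sum_of_subset (Finset.subset_univ _)
      _ = 2 * G.edgeFinset.card := G.sum_degrees_eq_twice_card_edges
  calc ∑ e ∈ G.edgeFinset, M e
      = ∑ i : Fin (arboricity G), ∑ e ∈ G.edgeFinset.filter (fun e => c e = i), M e :=
        (Finset.sum_fiberwise G.edgeFinset c M).symm
    _ ≤ ∑ _i : Fin (arboricity G), 2 * G.edgeFinset.card :=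
        Finset.sum_le_sum (fun i _ => key i)
    _ = arboricity G * (2 * G.edgeFinset.card) := by
        simp [Finset.sum_const, Finset.card_univ, mul_comm]
    _ = 2 * arboricity G * G.edgeFinset.card := by ring
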